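/- Let n≥1, let A⊂ℝ^n be a Borel set, β>0, and let H, E_0, E_1: A→ℝ be measurable functions such that for every t∈[0,1] the function e^{−β(H+(1−t)E_0+tE_1)} is integrable on A with positive total mass; let μ(t) be the probability measure on A with density proportional to e^{−β(H(x)+(1−t)E_0(x)+tE_1(x))}. Let G:A→ℝ be bounded and measurable, and assume sup_{t∈[0,1]} E_{μ(t)}[(E_1−E_0)²] < ∞. Then t ↦ E_{μ(t)}[G] is differentiable on (0,1) with derivative −β·Cov_{μ(t)}[G, E_1−E_0], and consequently E_{μ(1)}[G] − E_{μ(0)}[G] = −β·∫_0^1 Cov_{μ(t)}[G, E_1−E_0] dt. -/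

import Mathlib

open MeasureTheory Real Filter Topology

noncomputable section

/-- Covariance of two real observables under a measure. -/
def Cov {α : Type*} [MeasurableSpace α] (μ : Measure α) (f g : α → ℝ) : ℝ :=
  (∫ x, f x * g x ∂μ) - (∫ x, f x ∂μ) * ∫ x, g x ∂μ

/-- The interpolating Gibbs measures `dμ(t) ∝ e^{-β(H + (1-t)E₀ + tE₁)} 1_A dx`. -/
def interpGibbs {n : ℕ} (A : Set (Fin n → ℝ)) (β : ℝ) (H E₀ E₁ : (Fin n → ℝ) → ℝ)
    (t : ℝ) : Measure (Fin n → ℝ) :=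
  (ENNReal.ofReal (∫ x in A, Real.exp (-β * (H x + (1 - t) * E₀ x + t * E₁ x))))⁻¹ •
    ((volume.restrict A).withDensity fun x =>
      ENNReal.ofReal (Real.exp (-β * (H x + (1 - t) * E₀ x + t * E₁ x))))


lemma exp_linear_le {a b u v s : ℝ} (hus : u ≤ s) (hsv : s ≤ v) :
    Real.exp (a + s * b) ≤ Real.exp (a + u * b) + Real.exp (a + v * b) := by
  rcases le_or_gt 0 b with h | h
  · have : Real.exp (a + s * b) ≤ Real.exp (a + v * b) := by
      apply Real.exp_le_exp.2; nlinarith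
    linarith [Real.exp_pos (a + u * b)]
  · have : Real.exp (a + s * b) ≤ Real.exp (a + u * b) := by
      apply Real.exp_le_exp.2; nlinarith
    linarith [Real.exp_pos (a + v * b)]

lemma abs_mul_exp_le {a b s ε : ℝ} (hε : 0 < ε) :
    |b| * Real.exp (a + s * b) ≤
      ε⁻¹ * (Real.exp (a + (s - ε) * b) + Real.exp (a + (s + ε) * b)) := by
  have h1 : |b| ≤ ε⁻¹ * (Real.exp (-(ε * b)) + Real.exp (ε * b)) := by
    have h2 : ε * |b| ≤ Real.exp (ε * |b|) := (Real.add_one_le_exp _).trans' (by linarith)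
    have h3 : Real.exp (ε * |b|) ≤ Real.exp (-(ε * b)) + Real.exp (ε * b) := by
      rcases abs_cases b with ⟨he, _⟩ | ⟨he, _⟩
      · rw [he]; linarith [Real.exp_pos (-(ε * b))]
      · rw [he, mul_neg]; linarith [Real.exp_pos (ε * b)]
    rw [← mul_le_mul_iff_right₀ hε, ← mul_assoc, mul_inv_cancel₀ hε.ne', one_mul]
    exact h2.trans h3
  have hepos := Real.exp_pos (a + s * b)
  calc |b| * Real.exp (a + s * b)
      ≤ (ε⁻¹ * (Real.exp (-(ε * b)) + Real.exp (ε * b))) * Real.exp (a + s * b) := by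
        exact mul_le_mul_of_nonneg_right h1 hepos.le
    _ = ε⁻¹ * (Real.exp (-(ε*b) + (a + s*b)) + Real.exp (ε*b + (a + s*b))) := by
        rw [mul_assoc, add_mul, ← Real.exp_add, ← Real.exp_add]
    _ = ε⁻¹ * (Real.exp (a + (s - ε) * b) + Real.exp (a + (s + ε) * b)) := by
        rw [show -(ε*b) + (a + s*b) = a + (s - ε) * b by ring,
          show ε*b + (a + s*b) = a + (s + ε) * b by ring]

lemma sq_mul_exp_le {a b s ε : ℝ} (hε : 0 < ε) :
    b ^ 2 * Real.exp (a + s * b) ≤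
      (ε / 2)⁻¹ ^ 2 * (Real.exp (a + (s - ε) * b) + 2 * Real.exp (a + s * b)
        + Real.exp (a + (s + ε) * b)) := by
  have hε2 : 0 < ε / 2 := by linarith
  have h1 := abs_mul_exp_le (a := a) (b := b) (s := s) hε2
  have h2 := abs_mul_exp_le (a := a) (b := b) (s := s - ε / 2) hε2
  have h3 := abs_mul_exp_le (a := a) (b := b) (s := s + ε / 2) hε2
  rw [show s - ε / 2 - ε / 2 = s - ε by ring, show s - ε / 2 + ε / 2 = s by ring] at h2
  rw [show s + ε / 2 - ε / 2 = s by ring, show s + ε / 2 + ε / 2 = s + ε by ring] at h3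
  have hb := abs_nonneg b
  have hi : (0:ℝ) ≤ (ε / 2)⁻¹ := by positivity
  calc b ^ 2 * Real.exp (a + s * b) = |b| * (|b| * Real.exp (a + s * b)) := by
        rw [← mul_assoc, abs_mul_abs_self b, sq]
    _ ≤ |b| * ((ε / 2)⁻¹ * (Real.exp (a + (s - ε / 2) * b) + Real.exp (a + (s + ε / 2) * b))) :=
        mul_le_mul_of_nonneg_left h1 hb
    _ = (ε / 2)⁻¹ * (|b| * Real.exp (a + (s - ε / 2) * b) + |b| * Real.exp (a + (s + ε / 2) * b)) := by
        ring
    _ ≤ (ε / 2)⁻¹ * (((ε / 2)⁻¹ * (Real.exp (a + (s - ε) * b) + Real.exp (a + s * b)))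
          + ((ε / 2)⁻¹ * (Real.exp (a + s * b) + Real.exp (a + (s + ε) * b)))) := by
        gcongr
    _ = (ε / 2)⁻¹ ^ 2 * (Real.exp (a + (s - ε) * b) + 2 * Real.exp (a + s * b)
        + Real.exp (a + (s + ε) * b)) := by ring



def gibbsM {α : Type*} [MeasurableSpace α] (ν : Measure α) (a b : α → ℝ) (t : ℝ) :
    Measure α :=
  (ENNReal.ofReal (∫ x, Real.exp (a x + t * b x) ∂ν))⁻¹ •
    ν.withDensity fun x => ENNReal.ofReal (Real.exp (a x + t * b x))

lemma integral_norm_withDensity {α : Type*} [MeasurableSpace α] (ν : Measure α)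
    (f : α → ℝ) (hf : Measurable f) (hf0 : ∀ x, 0 ≤ f x) (g : α → ℝ) :
    ∫ x, g x ∂((ENNReal.ofReal (∫ x, f x ∂ν))⁻¹ • ν.withDensity fun x => ENNReal.ofReal (f x))
      = (∫ x, f x ∂ν)⁻¹ * ∫ x, f x * g x ∂ν := by
  have hZ : 0 ≤ ∫ x, f x ∂ν := integral_nonneg hf0
  have h1 : (ν.withDensity fun x => ENNReal.ofReal (f x))
      = ν.withDensity fun x => ((f x).toNNReal : ENNReal) := rfl
  rw [integral_smul_measure, h1,
    integral_withDensity_eq_integral_smul hf.real_toNNReal g,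
    ENNReal.toReal_inv, ENNReal.toReal_ofReal hZ, smul_eq_mul]
  congr 1
  refine integral_congr_ae (Eventually.of_forall fun x => ?_)
  simp [NNReal.smul_def, Real.coe_toNNReal _ (hf0 x)]

theorem gibbs_core {α : Type*} [MeasurableSpace α] (ν : Measure α) (a b G : α → ℝ)
    (ha : Measurable a) (hb : Measurable b) (hG : Measurable G)
    (hint : ∀ t ∈ Set.Icc (0 : ℝ) 1,
      Integrable (fun x => Real.exp (a x + t * b x)) ν ∧
        0 < ∫ x, Real.exp (a x + t * b x) ∂ν)
    (M : ℝ) (hM : ∀ x, |G x| ≤ M)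
    (M₂ : ℝ) (hM₂ : ∀ t ∈ Set.Icc (0 : ℝ) 1, (∫ x, (b x) ^ 2 ∂gibbsM ν a b t) ≤ M₂) :
    (∀ t ∈ Set.Ioo (0 : ℝ) 1,
      HasDerivAt (fun u => ∫ x, G x ∂gibbsM ν a b u) (Cov (gibbsM ν a b t) G b) t) ∧
    (∫ x, G x ∂gibbsM ν a b 1) - (∫ x, G x ∂gibbsM ν a b 0) =
      ∫ t in (0 : ℝ)..1, Cov (gibbsM ν a b t) G b := by
  set f : ℝ → α → ℝ := fun t x => Real.exp (a x + t * b x) with hfdef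
  have hfm : ∀ t, Measurable (f t) := fun t => (ha.add (hb.const_mul t)).exp
  have hf_pos : ∀ t x, 0 < f t x := fun t x => Real.exp_pos _
  set Z : ℝ → ℝ := fun t => ∫ x, f t x ∂ν with hZdef
  have hZpos : ∀ t ∈ Set.Icc (0 : ℝ) 1, 0 < Z t := fun t ht => (hint t ht).2
  have hfi : ∀ t ∈ Set.Icc (0 : ℝ) 1, Integrable (f t) ν := fun t ht => (hint t ht).1
  -- the expectation formula
  have hform : ∀ (t : ℝ) (g : α → ℝ),
      ∫ x, g x ∂gibbsM ν a b t = (Z t)⁻¹ * ∫ x, f t x * g x ∂ν := fun t g =>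
    integral_norm_withDensity ν (f t) (hfm t) (fun x => (hf_pos t x).le) g
  -- dominated differentiation machine
  have key : ∀ (g : α → ℝ), Measurable g → ∀ C : ℝ, (∀ x, |g x| ≤ C) →
      ∀ t₀ ∈ Set.Ioo (0 : ℝ) 1,
      Integrable (fun x => f t₀ x * (b x * g x)) ν ∧
      HasDerivAt (fun s => ∫ x, f s x * g x ∂ν) (∫ x, f t₀ x * (b x * g x) ∂ν) t₀ := by
    intro g hg C hC t₀ ht₀
    obtain ⟨ht0, ht1⟩ := ht₀
    set ε : ℝ := min t₀ (1 - t₀) / 2 with hεdef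
    have hε : 0 < ε := by
      have := lt_min ht0 (by linarith : (0:ℝ) < 1 - t₀)
      simp only [hεdef]; linarith
    have h2ε1 : 2 * ε ≤ t₀ := by
      have := min_le_left t₀ (1 - t₀); simp only [hεdef]; linarith
    have h2ε2 : 2 * ε ≤ 1 - t₀ := by
      have := min_le_right t₀ (1 - t₀); simp only [hεdef]; linarith
    have hmem1 : t₀ - 2 * ε ∈ Set.Icc (0:ℝ) 1 := ⟨by linarith, by linarith⟩
    have hmem2 : t₀ ∈ Set.Icc (0:ℝ) 1 := ⟨ht0.le, ht1.le⟩
    have hmem3 : t₀ + 2 * ε ∈ Set.Icc (0:ℝ) 1 := ⟨by linarith, by linarith⟩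
    have hbnd_int : Integrable
        (fun x => |C| * (ε⁻¹ * (f (t₀ - 2*ε) x + 2 * f t₀ x + f (t₀ + 2*ε) x))) ν :=
      ((((hfi _ hmem1).add ((hfi _ hmem2).const_mul 2)).add (hfi _ hmem3)).const_mul
        ε⁻¹).const_mul |C|
    have hres := hasDerivAt_integral_of_dominated_loc_of_deriv_le (μ := ν) (x₀ := t₀) (s := Metric.ball t₀ ε)
      (F := fun s x => f s x * g x) (F' := fun s x => f s x * (b x * g x))
      (bound := fun x => |C| * (ε⁻¹ * (f (t₀ - 2*ε) x + 2 * f t₀ x + f (t₀ + 2*ε) x)))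
      (Metric.ball_mem_nhds t₀ hε)
      (Eventually.of_forall fun s => ((hfm s).mul hg).aestronglyMeasurable)
      (by
        refine ((hfi _ hmem2).const_mul |C|).mono'
          ((hfm t₀).mul hg).aestronglyMeasurable (Eventually.of_forall fun x => ?_)
        rw [norm_mul, Real.norm_eq_abs, Real.norm_eq_abs, abs_of_pos (hf_pos t₀ x)]
        calc f t₀ x * |g x| ≤ f t₀ x * |C| :=
              mul_le_mul_of_nonneg_left ((hC x).trans (le_abs_self C)) (hf_pos t₀ x).le
          _ = |C| * f t₀ x := mul_comm _ _)
      ((hfm t₀).mul (hb.mul hg)).aestronglyMeasurable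
      (Eventually.of_forall fun x => by
        intro s hs
        simp only [Metric.mem_ball, Real.dist_eq, abs_sub_lt_iff] at hs
        show ‖f s x * (b x * g x)‖ ≤ |C| * (ε⁻¹ * (f (t₀ - 2*ε) x + 2 * f t₀ x + f (t₀ + 2*ε) x))
        have hb1 : ‖f s x * (b x * g x)‖ = |g x| * (|b x| * f s x) := by
          rw [norm_mul, Real.norm_eq_abs, Real.norm_eq_abs, abs_of_pos (hf_pos s x), abs_mul]
          ring
        rw [hb1]
        have h2 : |b x| * f s x ≤ ε⁻¹ * (f (s - ε) x + f (s + ε) x) := abs_mul_exp_le hε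
        have h3 : f (s - ε) x ≤ f (t₀ - 2*ε) x + f t₀ x :=
          exp_linear_le (by linarith [hs.1, hs.2]) (by linarith [hs.1, hs.2])
        have h4 : f (s + ε) x ≤ f t₀ x + f (t₀ + 2*ε) x :=
          exp_linear_le (by linarith [hs.1, hs.2]) (by linarith [hs.1, hs.2])
        calc |g x| * (|b x| * f s x) ≤ |C| * (|b x| * f s x) :=
              mul_le_mul_of_nonneg_right ((hC x).trans (le_abs_self C))
                (mul_nonneg (abs_nonneg _) (hf_pos s x).le)
          _ ≤ |C| * (ε⁻¹ * (f (s - ε) x + f (s + ε) x)) :=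
              mul_le_mul_of_nonneg_left h2 (abs_nonneg C)
          _ ≤ |C| * (ε⁻¹ * (f (t₀ - 2*ε) x + 2 * f t₀ x + f (t₀ + 2*ε) x)) := by
              have hi : (0:ℝ) ≤ ε⁻¹ := by positivity
              have : f (s - ε) x + f (s + ε) x
                  ≤ f (t₀ - 2*ε) x + 2 * f t₀ x + f (t₀ + 2*ε) x := by linarith
              exact mul_le_mul_of_nonneg_left
                (mul_le_mul_of_nonneg_left this hi) (abs_nonneg C))
      hbnd_int
      (Eventually.of_forall fun x => by
        intro s _
        show HasDerivAt (fun u => f u x * g x) (f s x * (b x * g x)) s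
        have h1 : HasDerivAt (fun u : ℝ => a x + u * b x) (b x) s :=
          (hasDerivAt_mul_const (b x)).const_add (a x)
        have h2 := (h1.exp).mul_const (g x)
        have h3 : Real.exp (a x + s * b x) * b x * g x = f s x * (b x * g x) := by
          simp only [hfdef]; ring
        rw [h3] at h2
        exact h2)
    exact hres
  -- derivative and integrability for `Z`
  have hone : ∀ x : α, |(1:ℝ)| ≤ (1:ℝ) := fun _ => by norm_num
  have keyZ : ∀ t₀ ∈ Set.Ioo (0:ℝ) 1,
      Integrable (fun x => f t₀ x * b x) ν ∧
      HasDerivAt Z (∫ x, f t₀ x * b x ∂ν) t₀ := by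
    intro t₀ ht₀
    obtain ⟨hi, hd⟩ := key (fun _ => 1) measurable_const 1 hone t₀ ht₀
    constructor
    · simpa [mul_one] using hi
    · have h1 : (fun s => ∫ x, f s x * (fun _ : α => (1:ℝ)) x ∂ν) = Z := by
        funext s; simp only [hZdef, mul_one]
      have h2 : (∫ x, f t₀ x * (b x * (fun _ : α => (1:ℝ)) x) ∂ν)
          = ∫ x, f t₀ x * b x ∂ν := by simp only [mul_one]
      rw [h1, h2] at hd; exact hd
  have hfunG : (fun u => ∫ x, G x ∂gibbsM ν a b u)
      = fun u => (∫ x, f u x * G x ∂ν) / Z u := by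
    funext u; rw [hform u G, inv_mul_eq_div]
  -- Part 1 : the derivative
  have part1 : ∀ t ∈ Set.Ioo (0:ℝ) 1,
      HasDerivAt (fun u => ∫ x, G x ∂gibbsM ν a b u) (Cov (gibbsM ν a b t) G b) t := by
    intro t ht
    have htIcc : t ∈ Set.Icc (0:ℝ) 1 := ⟨ht.1.le, ht.2.le⟩
    have hne : Z t ≠ 0 := (hZpos t htIcc).ne'
    have hNd := (key G hG M hM t ht).2
    have hZd := (keyZ t ht).2
    have hdiv := hNd.div hZd hne
    rw [hfunG]
    refine hdiv.congr_deriv ?_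
    rw [Cov, hform t (fun x => G x * b x), hform t G, hform t b]
    have h1 : (∫ x, f t x * (G x * b x) ∂ν) = ∫ x, f t x * (b x * G x) ∂ν := by
      congr 1; funext x; ring
    rw [h1]
    field_simp
  -- continuity machine
  have hcont : ∀ (g : α → ℝ), Measurable g → ∀ C : ℝ, (∀ x, |g x| ≤ C) →
      ContinuousOn (fun s => ∫ x, f s x * g x ∂ν) (Set.Icc (0:ℝ) 1) := by
    intro g hg C hC
    apply continuousOn_of_dominated (bound := fun x => |C| * (f 0 x + f 1 x))
    · exact fun s _ => ((hfm s).mul hg).aestronglyMeasurable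
    · intro s hs
      refine Eventually.of_forall fun x => ?_
      rw [norm_mul, Real.norm_eq_abs, Real.norm_eq_abs, abs_of_pos (hf_pos s x)]
      have h1 : f s x ≤ f 0 x + f 1 x := by
        have := exp_linear_le (a := a x) (b := b x) hs.1 hs.2
        simpa [hfdef] using this
      calc f s x * |g x| ≤ f s x * |C| :=
            mul_le_mul_of_nonneg_left ((hC x).trans (le_abs_self C)) (hf_pos s x).le
        _ ≤ (f 0 x + f 1 x) * |C| := mul_le_mul_of_nonneg_right h1 (abs_nonneg C)
        _ = |C| * (f 0 x + f 1 x) := mul_comm _ _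
    · exact ((hfi 0 (by norm_num)).add (hfi 1 (by norm_num))).const_mul |C|
    · refine Eventually.of_forall fun x => ?_
      apply Continuous.continuousOn
      have h2 : Continuous fun s : ℝ => a x + s * b x :=
        continuous_const.add (continuous_id.mul continuous_const)
      exact (Real.continuous_exp.comp h2).mul continuous_const
  have hcontE : ContinuousOn (fun u => ∫ x, G x ∂gibbsM ν a b u) (Set.Icc (0:ℝ) 1) := by
    rw [hfunG]
    have hZc : ContinuousOn Z (Set.Icc (0:ℝ) 1) := by
      have h3 := hcont (fun _ => 1) measurable_const 1 hone
      have he : (fun s => ∫ x, f s x * (fun _ : α => (1:ℝ)) x ∂ν) = Z := by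
        funext s; simp only [hZdef, mul_one]
      rwa [he] at h3
    exact (hcont G hG M hM).div hZc fun t ht => (hZpos t ht).ne'
  -- uniform bound on the covariance
  set Q : ℝ → ℝ := fun t => Cov (gibbsM ν a b t) G b with hQdef
  have hM₂0 : (0:ℝ) ≤ max M₂ 0 := le_max_right _ _
  have habs : ∀ u v : ℝ, |u - v| ≤ |u| + |v| := fun u v => by
    rw [sub_eq_add_neg]; exact (abs_add_le u (-v)).trans_eq (by rw [abs_neg])
  have hcovbd : ∀ t ∈ Set.Ioo (0:ℝ) 1, |Q t| ≤ 2 * (|M| * (1 + max M₂ 0)) := by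
    intro t ht
    have htIcc : t ∈ Set.Icc (0:ℝ) 1 := ⟨ht.1.le, ht.2.le⟩
    have hZ := hZpos t htIcc
    obtain ⟨ht0, ht1⟩ := ht
    set ε : ℝ := min t (1 - t) with hεdef
    have hε : 0 < ε := lt_min ht0 (by linarith)
    have hl := min_le_left t (1-t)
    have hr := min_le_right t (1-t)
    have hε1 : t - ε ∈ Set.Icc (0:ℝ) 1 := ⟨by linarith, by linarith⟩
    have hε2 : t + ε ∈ Set.Icc (0:ℝ) 1 := ⟨by linarith, by linarith⟩
    have hb2int : Integrable (fun x => f t x * b x ^ 2) ν := by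
      refine (((((hfi _ hε1).add ((hfi _ htIcc).const_mul 2)).add (hfi _ hε2)).const_mul
        ((ε/2)⁻¹ ^ 2)).mono' ((hfm t).mul (hb.pow_const 2)).aestronglyMeasurable
        (Eventually.of_forall fun x => ?_))
      show ‖f t x * b x ^ 2‖ ≤ (ε/2)⁻¹ ^ 2 * (f (t - ε) x + 2 * f t x + f (t + ε) x)
      rw [Real.norm_eq_abs, abs_mul, abs_of_pos (hf_pos t x), abs_of_nonneg (sq_nonneg (b x))]
      calc f t x * b x ^ 2 = b x ^ 2 * f t x := mul_comm _ _
        _ ≤ (ε/2)⁻¹ ^ 2 * (f (t - ε) x + 2 * f t x + f (t + ε) x) := sq_mul_exp_le hε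
    have hsplit : (∫ x, f t x * (1 + b x ^ 2) ∂ν) = Z t + ∫ x, f t x * b x ^ 2 ∂ν := by
      rw [show (fun x => f t x * (1 + b x ^ 2)) = fun x => f t x + f t x * b x ^ 2 from
        funext fun x => by ring, integral_add (hfi t htIcc) hb2int]
    have hfb2' : Integrable (fun x => f t x * (1 + b x ^ 2)) ν := by
      rw [show (fun x => f t x * (1 + b x ^ 2)) = fun x => f t x + f t x * b x ^ 2 from
        funext fun x => by ring]
      exact (hfi t htIcc).add hb2int
    have hIb2 : (∫ x, f t x * b x ^ 2 ∂ν) ≤ max M₂ 0 * Z t := by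
      have h0 := hM₂ t htIcc
      rw [hform t (fun x => b x ^ 2)] at h0
      have h1 := (inv_mul_le_iff₀ hZ).1 h0
      calc (∫ x, f t x * b x ^ 2 ∂ν) ≤ Z t * M₂ := h1
        _ ≤ max M₂ 0 * Z t := by nlinarith [le_max_left M₂ 0]
    have hP : |∫ x, f t x * (G x * b x) ∂ν| ≤ |M| * ((1 + max M₂ 0) * Z t) := by
      have h2 : |∫ x, f t x * (G x * b x) ∂ν| ≤ ∫ x, ‖f t x * (G x * b x)‖ ∂ν := by
        rw [← Real.norm_eq_abs]; exact norm_integral_le_integral_norm _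
      refine h2.trans ?_
      have h3 : (∫ x, ‖f t x * (G x * b x)‖ ∂ν)
          ≤ ∫ x, |M| * (f t x * (1 + b x ^ 2)) ∂ν := by
        refine integral_mono_of_nonneg (Eventually.of_forall fun x => norm_nonneg _)
          (hfb2'.const_mul |M|) (Eventually.of_forall fun x => ?_)
        show ‖f t x * (G x * b x)‖ ≤ |M| * (f t x * (1 + b x ^ 2))
        rw [Real.norm_eq_abs, abs_mul, abs_of_pos (hf_pos t x), abs_mul]
        have hGx := (hM x).trans (le_abs_self M)
        have hbb : |b x| ≤ 1 + b x ^ 2 := by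
          nlinarith [sq_abs (b x), sq_nonneg (|b x| - 1)]
        nlinarith [abs_nonneg (G x), abs_nonneg (b x), hf_pos t x, abs_nonneg M,
          mul_le_mul hGx hbb (abs_nonneg (b x)) (abs_nonneg M)]
      refine h3.trans ?_
      rw [integral_const_mul, hsplit]
      nlinarith [abs_nonneg M, hIb2, hZ]
    have hQ' : |∫ x, f t x * G x ∂ν| ≤ |M| * Z t := by
      have h2 : |∫ x, f t x * G x ∂ν| ≤ ∫ x, ‖f t x * G x‖ ∂ν := by
        rw [← Real.norm_eq_abs]; exact norm_integral_le_integral_norm _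
      refine h2.trans ?_
      have h3 : (∫ x, ‖f t x * G x‖ ∂ν) ≤ ∫ x, |M| * f t x ∂ν := by
        refine integral_mono_of_nonneg (Eventually.of_forall fun x => norm_nonneg _)
          ((hfi t htIcc).const_mul |M|) (Eventually.of_forall fun x => ?_)
        show ‖f t x * G x‖ ≤ |M| * f t x
        rw [Real.norm_eq_abs, abs_mul, abs_of_pos (hf_pos t x)]
        have hGx := (hM x).trans (le_abs_self M)
        nlinarith [abs_nonneg (G x), hf_pos t x]
      refine h3.trans ?_
      rw [integral_const_mul]
    have hR : |∫ x, f t x * b x ∂ν| ≤ (1 + max M₂ 0) * Z t := by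
      have h2 : |∫ x, f t x * b x ∂ν| ≤ ∫ x, ‖f t x * b x‖ ∂ν := by
        rw [← Real.norm_eq_abs]; exact norm_integral_le_integral_norm _
      refine h2.trans ?_
      have h3 : (∫ x, ‖f t x * b x‖ ∂ν) ≤ ∫ x, f t x * (1 + b x ^ 2) ∂ν := by
        refine integral_mono_of_nonneg (Eventually.of_forall fun x => norm_nonneg _)
          hfb2' (Eventually.of_forall fun x => ?_)
        show ‖f t x * b x‖ ≤ f t x * (1 + b x ^ 2)
        rw [Real.norm_eq_abs, abs_mul, abs_of_pos (hf_pos t x)]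
        nlinarith [hf_pos t x, sq_abs (b x), sq_nonneg (|b x| - 1), abs_nonneg (b x)]
      refine h3.trans ?_
      rw [hsplit]
      nlinarith [hIb2, hZ]
    have e1 : |(Z t)⁻¹ * ∫ x, f t x * (G x * b x) ∂ν| ≤ |M| * (1 + max M₂ 0) := by
      rw [abs_mul, abs_of_pos (inv_pos.2 hZ), inv_mul_le_iff₀ hZ]
      calc |∫ x, f t x * (G x * b x) ∂ν| ≤ |M| * ((1 + max M₂ 0) * Z t) := hP
        _ = Z t * (|M| * (1 + max M₂ 0)) := by ring
    have e2 : |(Z t)⁻¹ * ∫ x, f t x * G x ∂ν| ≤ |M| := by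
      rw [abs_mul, abs_of_pos (inv_pos.2 hZ), inv_mul_le_iff₀ hZ]
      calc |∫ x, f t x * G x ∂ν| ≤ |M| * Z t := hQ'
        _ = Z t * |M| := mul_comm _ _
    have e3 : |(Z t)⁻¹ * ∫ x, f t x * b x ∂ν| ≤ 1 + max M₂ 0 := by
      rw [abs_mul, abs_of_pos (inv_pos.2 hZ), inv_mul_le_iff₀ hZ]
      calc |∫ x, f t x * b x ∂ν| ≤ (1 + max M₂ 0) * Z t := hR
        _ = Z t * (1 + max M₂ 0) := mul_comm _ _
    have hQeq : Q t = (Z t)⁻¹ * (∫ x, f t x * (G x * b x) ∂ν)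
        - ((Z t)⁻¹ * ∫ x, f t x * G x ∂ν) * ((Z t)⁻¹ * ∫ x, f t x * b x ∂ν) := by
      rw [hQdef]
      simp only [Cov]
      rw [hform t (fun x => G x * b x), hform t G, hform t b]
    rw [hQeq]
    calc |(Z t)⁻¹ * (∫ x, f t x * (G x * b x) ∂ν)
          - ((Z t)⁻¹ * ∫ x, f t x * G x ∂ν) * ((Z t)⁻¹ * ∫ x, f t x * b x ∂ν)|
        ≤ |(Z t)⁻¹ * (∫ x, f t x * (G x * b x) ∂ν)|
          + |((Z t)⁻¹ * ∫ x, f t x * G x ∂ν) * ((Z t)⁻¹ * ∫ x, f t x * b x ∂ν)| := habs _ _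
      _ = |(Z t)⁻¹ * (∫ x, f t x * (G x * b x) ∂ν)|
          + |(Z t)⁻¹ * ∫ x, f t x * G x ∂ν| * |(Z t)⁻¹ * ∫ x, f t x * b x ∂ν| := by
          rw [abs_mul ((Z t)⁻¹ * ∫ x, f t x * G x ∂ν) ((Z t)⁻¹ * ∫ x, f t x * b x ∂ν)]
      _ ≤ |M| * (1 + max M₂ 0) + |M| * (1 + max M₂ 0) :=
          add_le_add e1 (mul_le_mul e2 e3 (abs_nonneg _) (by positivity))
      _ = 2 * (|M| * (1 + max M₂ 0)) := by ring
  -- interval integrability of the covariance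
  have hDmeas : AEStronglyMeasurable Q (volume.restrict (Set.Ioo (0:ℝ) 1)) := by
    refine ((measurable_deriv (fun u => ∫ x, G x ∂gibbsM ν a b u))
      |>.aestronglyMeasurable.restrict).congr ?_
    refine (ae_restrict_iff' measurableSet_Ioo).2 (Eventually.of_forall fun t ht => ?_)
    exact (part1 t ht).deriv
  have hDint : IntervalIntegrable Q volume 0 1 := by
    rw [intervalIntegrable_iff_integrableOn_Ioo_of_le zero_le_one]
    refine Integrable.mono' (g := fun _ => 2 * (|M| * (1 + max M₂ 0)))
      (integrableOn_const measure_Ioo_lt_top.ne) hDmeas ?_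
    refine (ae_restrict_iff' measurableSet_Ioo).2 (Eventually.of_forall fun t ht => ?_)
    rw [Real.norm_eq_abs]
    exact hcovbd t ht
  have hFTC := intervalIntegral.integral_eq_sub_of_hasDeriv_right_of_le zero_le_one hcontE
    (fun t ht => (part1 t ht).hasDerivWithinAt) hDint
  exact ⟨part1, hFTC.symm⟩

lemma Cov_const_mul {α : Type*} [MeasurableSpace α] (μ : Measure α) (f g : α → ℝ) (c : ℝ) :
    Cov μ f (fun x => c * g x) = c * Cov μ f g := by
  simp only [Cov]
  rw [show (fun x => f x * (c * g x)) = (fun x => c * (f x * g x)) from funext fun x => by ring,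
    integral_const_mul, integral_const_mul]
  ring

/-- **Differentiation of interpolating Gibbs expectations.**  If the interpolating densities
are integrable with positive mass, `G` is bounded measurable and
`sup_{t∈[0,1]} E_{μ(t)}[(E₁-E₀)²] < ∞`, then `t ↦ E_{μ(t)}[G]` is differentiable on `(0,1)`
with derivative `-β Cov_{μ(t)}[G, E₁-E₀]`, and
`E_{μ(1)}[G] - E_{μ(0)}[G] = -β ∫₀¹ Cov_{μ(t)}[G, E₁-E₀] dt`. -/
theorem interpolating_gibbs_derivative (n : ℕ) (A : Set (Fin n → ℝ))
    (hA : MeasurableSet A) (β : ℝ) (hβ : 0 < β)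
    (H E₀ E₁ G : (Fin n → ℝ) → ℝ)
    (hH : Measurable H) (hE₀ : Measurable E₀) (hE₁ : Measurable E₁) (hG : Measurable G)
    (hint : ∀ t ∈ Set.Icc (0 : ℝ) 1,
      IntegrableOn (fun x => Real.exp (-β * (H x + (1 - t) * E₀ x + t * E₁ x))) A volume ∧
        0 < ∫ x in A, Real.exp (-β * (H x + (1 - t) * E₀ x + t * E₁ x)))
    (hGbd : ∃ M, ∀ x, |G x| ≤ M)
    (hE2 : ∃ M₂ : ℝ, ∀ t ∈ Set.Icc (0 : ℝ) 1,
      (∫ x, (E₁ x - E₀ x) ^ 2 ∂interpGibbs A β H E₀ E₁ t) ≤ M₂) :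
    (∀ t ∈ Set.Ioo (0 : ℝ) 1,
      HasDerivAt (fun u => ∫ x, G x ∂interpGibbs A β H E₀ E₁ u)
        (-β * Cov (interpGibbs A β H E₀ E₁ t) G (fun x => E₁ x - E₀ x)) t) ∧
    (∫ x, G x ∂interpGibbs A β H E₀ E₁ 1) - (∫ x, G x ∂interpGibbs A β H E₀ E₁ 0) =
      -β * ∫ t in (0 : ℝ)..1, Cov (interpGibbs A β H E₀ E₁ t) G (fun x => E₁ x - E₀ x) := by
  obtain ⟨M, hM⟩ := hGbd
  obtain ⟨M₂, hM₂⟩ := hE2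
  set ν : Measure (Fin n → ℝ) := volume.restrict A with hν
  set a : (Fin n → ℝ) → ℝ := fun x => -β * (H x + E₀ x) with ha
  set b : (Fin n → ℝ) → ℝ := fun x => -β * (E₁ x - E₀ x) with hbdef
  have harg : ∀ t x, -β * (H x + (1 - t) * E₀ x + t * E₁ x) = a x + t * b x := by
    intro t x; simp only [a, b]; ring
  have hμ : ∀ t, interpGibbs A β H E₀ E₁ t = gibbsM ν a b t := by
    intro t
    simp only [interpGibbs, gibbsM, harg, hν]
  have ham : Measurable a := (hH.add hE₀).const_mul (-β)
  have hbm : Measurable b := (hE₁.sub hE₀).const_mul (-β)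
  have hint' : ∀ t ∈ Set.Icc (0 : ℝ) 1,
      Integrable (fun x => Real.exp (a x + t * b x)) ν ∧
        0 < ∫ x, Real.exp (a x + t * b x) ∂ν := by
    intro t ht
    have := hint t ht
    constructor
    · have h1 := this.1
      simp only [IntegrableOn, harg] at h1
      exact h1
    · have h2 := this.2
      simp only [harg] at h2
      exact h2
  have hb2 : ∀ t ∈ Set.Icc (0 : ℝ) 1, (∫ x, (b x) ^ 2 ∂gibbsM ν a b t) ≤ β ^ 2 * M₂ := by
    intro t ht
    have h1 : (fun x => (b x) ^ 2) = fun x => β ^ 2 * (E₁ x - E₀ x) ^ 2 := by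
      funext x; simp only [b]; ring
    rw [h1, integral_const_mul, ← hμ]
    exact mul_le_mul_of_nonneg_left (hM₂ t ht) (sq_nonneg β)
  obtain ⟨hder, hftc⟩ := gibbs_core ν a b G ham hbm hG hint' M hM (β ^ 2 * M₂) hb2
  have hcov : ∀ t, Cov (gibbsM ν a b t) G b
      = -β * Cov (interpGibbs A β H E₀ E₁ t) G (fun x => E₁ x - E₀ x) := by
    intro t
    rw [hμ t, show b = fun x => -β * (E₁ x - E₀ x) from rfl, Cov_const_mul]
  constructor
  · intro t ht
    have h := hder t ht
    rw [hcov] at h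
    simp only [← hμ] at h
    exact h
  · rw [hμ 1, hμ 0, hftc, ← intervalIntegral.integral_const_mul]
    exact intervalIntegral.integral_congr fun t _ => hcov t
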